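/- Under the hypotheses of the previous sufficient-decrease setting (d defined groupwise via G̃ and Ĝ, with (1−ε)‖[x]_g‖² < α[∇Ψ(x)]_gᵀ[x]_g for g ∈ Ĝ, ε ∈ [0,1), α > 0), if d ≠ 0 then d is a descent direction: dᵀ∇Ψ(x) < 0. In fact dᵀ∇Ψ(x) ≤ −Σ_{g∈G̃}‖[∇Ψ(x)]_g‖² − (1−ε)/α² · Σ_{g∈Ĝ}‖[x]_g‖². -/

import Mathlib

open scoped RealInnerProductSpace

theorem halfspace_step_descent_direction
    {ι : Type*} [Fintype ι] (m : ι → ℕ)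
    (Ψ : PiLp 2 (fun g : ι => EuclideanSpace ℝ (Fin (m g))) → ℝ)
    (α ε : ℝ) (hα : 0 < α) (hε0 : 0 ≤ ε) (hε1 : ε < 1)
    (x d : PiLp 2 (fun g : ι => EuclideanSpace ℝ (Fin (m g))))
    (hdiff : DifferentiableAt ℝ Ψ x)
    (Gt Gh : Finset ι) (hdisj : Disjoint Gt Gh)
    (hdGt : ∀ g ∈ Gt, d g = -((gradient Ψ x) g))
    (hdGh : ∀ g ∈ Gh, d g = -(α⁻¹ • x g))
    (hd0 : ∀ g, g ∉ Gt → g ∉ Gh → d g = 0)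
    (hhalf : ∀ g ∈ Gh, (1 - ε) * ‖x g‖ ^ 2 < α * ⟪(gradient Ψ x) g, x g⟫) :
    ⟪d, gradient Ψ x⟫ ≤ - ∑ g ∈ Gt, ‖(gradient Ψ x) g‖ ^ 2
        - (1 - ε) / α ^ 2 * ∑ g ∈ Gh, ‖x g‖ ^ 2
      ∧ (d ≠ 0 → ⟪d, gradient Ψ x⟫ < 0) := by
  classical
  set G := gradient Ψ x with hG
  have hsum : ⟪d, G⟫ = ∑ g, ⟪d g, G g⟫ := PiLp.inner_apply d G
  have hsplit : ⟪d, G⟫ = ∑ g ∈ Gt ∪ Gh, ⟪d g, G g⟫ := by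
    rw [hsum]
    refine (Finset.sum_subset (Finset.subset_univ _) ?_).symm
    intro g _ hg
    rw [hd0 g (fun h => hg (Finset.mem_union_left _ h))
        (fun h => hg (Finset.mem_union_right _ h))]
    simp
  rw [Finset.sum_union hdisj] at hsplit
  have hGt : ∀ g ∈ Gt, ⟪d g, G g⟫ = -(‖G g‖ ^ 2) := by
    intro g hg
    rw [hdGt g hg, inner_neg_left, real_inner_self_eq_norm_sq]
  have hGh : ∀ g ∈ Gh, ⟪d g, G g⟫ ≤ -((1 - ε) / α ^ 2 * ‖x g‖ ^ 2) := by
    intro g hg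
    rw [hdGh g hg, inner_neg_left, inner_smul_left]
    have h := hhalf g hg
    rw [real_inner_comm]
    have hα2 : (0:ℝ) < α ^ 2 := by positivity
    rw [RCLike.conj_to_real, neg_le_neg_iff, div_mul_eq_mul_div, div_le_iff₀ hα2]
    have he : α⁻¹ * ⟪G g, x g⟫ * α ^ 2 = α * ⟪G g, x g⟫ := by
      field_simp
    linarith [h, he.ge, he.le]
  have hmain : ⟪d, G⟫ ≤ - ∑ g ∈ Gt, ‖G g‖ ^ 2 - (1 - ε) / α ^ 2 * ∑ g ∈ Gh, ‖x g‖ ^ 2 := by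
    rw [hsplit, Finset.sum_congr rfl hGt]
    have h2 : ∑ g ∈ Gh, ⟪d g, G g⟫ ≤ ∑ g ∈ Gh, -((1 - ε) / α ^ 2 * ‖x g‖ ^ 2) :=
      Finset.sum_le_sum hGh
    rw [Finset.sum_neg_distrib]
    simp only [Finset.sum_neg_distrib, ← Finset.mul_sum] at h2
    linarith
  refine ⟨hmain, fun hd => ?_⟩
  obtain ⟨g, hgne⟩ : ∃ g, d g ≠ 0 := by
    by_contra h
    push_neg at h
    exact hd (PiLp.ext h)
  have hA : (0:ℝ) ≤ ∑ g ∈ Gt, ‖G g‖ ^ 2 := Finset.sum_nonneg fun g _ => by positivity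
  have hB : (0:ℝ) ≤ ∑ g ∈ Gh, ‖x g‖ ^ 2 := Finset.sum_nonneg fun g _ => by positivity
  have hc : (0:ℝ) < (1 - ε) / α ^ 2 := div_pos (by linarith) (by positivity)
  by_cases hgt : g ∈ Gt
  · have : ‖G g‖ ^ 2 ≤ ∑ g ∈ Gt, ‖G g‖ ^ 2 :=
      Finset.single_le_sum (f := fun g => ‖G g‖ ^ 2) (fun g _ => by positivity) hgt
    have hGne : G g ≠ 0 := by
      intro h0; apply hgne; rw [hdGt g hgt, h0, neg_zero]
    have : (0:ℝ) < ‖G g‖ ^ 2 := pow_pos (norm_pos_iff.mpr hGne) 2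
    nlinarith
  · by_cases hgh : g ∈ Gh
    · have : ‖x g‖ ^ 2 ≤ ∑ g ∈ Gh, ‖x g‖ ^ 2 :=
        Finset.single_le_sum (f := fun g => ‖x g‖ ^ 2) (fun g _ => by positivity) hgh
      have hxne : x g ≠ 0 := by
        intro h0; apply hgne; rw [hdGh g hgh, h0, smul_zero, neg_zero]
      have : (0:ℝ) < ‖x g‖ ^ 2 := pow_pos (norm_pos_iff.mpr hxne) 2
      nlinarith
    · exact absurd (hd0 g hgt hgh) hgne
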